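/- arXiv:1201.2557 — 2 statements merged into one kernel-verified Lean document; each statement's English description precedes it below -/
import Mathlib

section
/- Let V = F_2^{2g} with standard symplectic form. The Arf invariant arf(q) := Σ_{i=1}^g q(e_i)q(f_i) of a quadratic form q ∈ Q(V) is independent of the choice of symplectic basis: if (e_1,...,e_g,f_1,...,f_g) and (e'_1,...,e'_g,f'_1,...,f'_g) are two symplectic bases of V, then Σ_i q(e_i)q(f_i) = Σ_i q(e'_i)q(f'_i). -/
private def eps : ZMod 2 → ℤ := fun x => (-1) ^ x.val

private lemma eps_add : ∀ x y : ZMod 2, eps (x + y) = eps x * eps y := by decide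

private lemma eps_zero : eps 0 = 1 := by decide

private lemma eps_inj : ∀ x y : ZMod 2, eps x = eps y → x = y := by decide

private lemma eps_sum {ι : Type*} (s : Finset ι) (p : ι → ZMod 2) :
    eps (∑ i ∈ s, p i) = ∏ i ∈ s, eps (p i) := by
  classical
  induction s using Finset.cons_induction with
  | empty => simp [eps_zero]
  | cons a s ha ih => rw [Finset.sum_cons, Finset.prod_cons, eps_add, ih]

private lemma plane_sum (α β : ZMod 2) :
    ∑ p : ZMod 2 × ZMod 2, eps (p.1 * α + p.2 * β + p.1 * p.2) = 2 * eps (α * β) := by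
  revert α β; decide

private lemma q_zero {V : Type*} [AddCommGroup V] [Module (ZMod 2) V]
    (B : V →ₗ[ZMod 2] V →ₗ[ZMod 2] ZMod 2)
    (q : V → ZMod 2) (hq : ∀ x y, q (x + y) = q x + q y + B x y) : q 0 = 0 := by
  have h := hq 0 0
  simp at h
  linear_combination h

private lemma q_sum_orth {V : Type*} [AddCommGroup V] [Module (ZMod 2) V]
    (B : V →ₗ[ZMod 2] V →ₗ[ZMod 2] ZMod 2)
    (q : V → ZMod 2) (hq : ∀ x y, q (x + y) = q x + q y + B x y)
    {ι : Type*} [DecidableEq ι] (s : Finset ι) (x : ι → V)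
    (h : ∀ i ∈ s, ∀ j ∈ s, i ≠ j → B (x i) (x j) = 0) :
    q (∑ i ∈ s, x i) = ∑ i ∈ s, q (x i) := by
  induction s using Finset.cons_induction with
  | empty => simpa using q_zero B q hq
  | cons a s ha ih =>
    rw [Finset.sum_cons, Finset.sum_cons, hq]
    have hB : (B (x a)) (∑ i ∈ s, x i) = 0 := by
      rw [map_sum]
      apply Finset.sum_eq_zero
      intro i hi
      exact h a (Finset.mem_cons_self a s) i (Finset.mem_cons_of_mem hi)
        (fun e => ha (e ▸ hi))
    rw [hB, ih (fun i hi j hj hij => h i (Finset.mem_cons_of_mem hi) j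
      (Finset.mem_cons_of_mem hj) hij), add_zero]

private lemma basis_sum (g : ℕ) {V : Type*} [AddCommGroup V] [Module (ZMod 2) V]
    (B : V →ₗ[ZMod 2] V →ₗ[ZMod 2] ZMod 2)
    (halt : ∀ x, B x x = 0)
    (b : Fin g ⊕ Fin g → V)
    (hb1 : ∀ i j, B (b (.inl i)) (b (.inr j)) = if i = j then 1 else 0)
    (hb2 : ∀ i j, B (b (.inl i)) (b (.inl j)) = 0)
    (hb3 : ∀ i j, B (b (.inr i)) (b (.inr j)) = 0)
    (q : V → ZMod 2) (hq : ∀ x y, q (x + y) = q x + q y + B x y) :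
    ∑ c : Fin g ⊕ Fin g → ZMod 2, eps (q (∑ k, c k • b k))
      = 2 ^ g * eps (∑ i, q (b (.inl i)) * q (b (.inr i))) := by
  classical
  have hsymm : ∀ x y, B x y = B y x := by
    intro x y
    have h := halt (x + y)
    simp [map_add, halt] at h
    have h2 : (2 : ZMod 2) = 0 := rfl
    linear_combination h - (B y) x * h2
  have q0 := q_zero B q hq
  have qsmul : ∀ (a : ZMod 2) (v : V), q (a • v) = a * q v := by
    intro a v
    rcases (show a = 0 ∨ a = 1 by revert a; decide) with rfl | rfl <;> simp [q0]
  -- the i-th hyperbolic plane contribution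
  set w : Fin g → (ZMod 2 × ZMod 2) → V :=
    fun i p => p.1 • b (.inl i) + p.2 • b (.inr i) with hw
  have qplane : ∀ i p, q (w i p) = p.1 * q (b (.inl i)) + p.2 * q (b (.inr i)) + p.1 * p.2 := by
    intro i p
    rw [hw]
    simp only [hq, qsmul, map_smul, smul_eq_mul, LinearMap.smul_apply, hb1, if_pos rfl, if_true]
    ring
  have orth : ∀ i j, i ≠ j → ∀ p r, B (w i p) (w j r) = 0 := by
    intro i j hij p r
    simp [hw, map_add, map_smul, hb1, hb2, hb3, hsymm (b (.inr i)) (b (.inl j)),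
      if_neg hij, if_neg (Ne.symm hij)]
  have key : ∀ d : Fin g → ZMod 2 × ZMod 2,
      q (∑ i, w i (d i)) = ∑ i, ((d i).1 * q (b (.inl i)) + (d i).2 * q (b (.inr i))
        + (d i).1 * (d i).2) := by
    intro d
    rw [q_sum_orth B q hq _ _ (fun i _ j _ hij => orth i j hij (d i) (d j))]
    exact Finset.sum_congr rfl fun i _ => qplane i (d i)
  -- change variables from (Fin g ⊕ Fin g → ZMod 2) to (Fin g → ZMod 2 × ZMod 2)
  let E : ((Fin g ⊕ Fin g) → ZMod 2) ≃ (Fin g → ZMod 2 × ZMod 2) :=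
    (Equiv.sumArrowEquivProdArrow _ _ _).trans (Equiv.arrowProdEquivProdArrow _ _ _).symm
  have hsum : ∀ c : Fin g ⊕ Fin g → ZMod 2,
      (∑ k, c k • b k) = ∑ i, w i (c (.inl i), c (.inr i)) := by
    intro c
    rw [Fintype.sum_sum_type, ← Finset.sum_add_distrib]
  calc ∑ c : Fin g ⊕ Fin g → ZMod 2, eps (q (∑ k, c k • b k))
      = ∑ d : Fin g → ZMod 2 × ZMod 2,
          ∏ i, eps ((d i).1 * q (b (.inl i)) + (d i).2 * q (b (.inr i))
            + (d i).1 * (d i).2) := by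
        rw [← Equiv.sum_comp E.symm]
        refine Finset.sum_congr rfl fun d _ => ?_
        have h1 : ∀ i, E.symm d (.inl i) = (d i).1 := fun i => by
          simp [E, Equiv.sumArrowEquivProdArrow, Equiv.arrowProdEquivProdArrow]
        have h2 : ∀ i, E.symm d (.inr i) = (d i).2 := fun i => by
          simp [E, Equiv.sumArrowEquivProdArrow, Equiv.arrowProdEquivProdArrow]
        rw [hsum, key]
        simp only [h1, h2]
        rw [eps_sum]
    _ = ∏ i, ∑ p : ZMod 2 × ZMod 2, eps (p.1 * q (b (.inl i)) + p.2 * q (b (.inr i))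
          + p.1 * p.2) := by
        rw [Finset.prod_univ_sum]
        simp
    _ = ∏ i : Fin g, 2 * eps (q (b (.inl i)) * q (b (.inr i))) := by
        exact Finset.prod_congr rfl fun i _ => plane_sum _ _
    _ = 2 ^ g * eps (∑ i, q (b (.inl i)) * q (b (.inr i))) := by
        rw [Finset.prod_mul_distrib, eps_sum]
        simp

theorem arf_independent_of_symplectic_basis (g : ℕ)
    (V : Type*) [AddCommGroup V] [Module (ZMod 2) V]
    (B : V →ₗ[ZMod 2] V →ₗ[ZMod 2] ZMod 2)
    (halt : ∀ x, B x x = 0)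
    (b b' : Module.Basis (Fin g ⊕ Fin g) (ZMod 2) V)
    (hb1 : ∀ i j, B (b (.inl i)) (b (.inr j)) = if i = j then 1 else 0)
    (hb2 : ∀ i j, B (b (.inl i)) (b (.inl j)) = 0)
    (hb3 : ∀ i j, B (b (.inr i)) (b (.inr j)) = 0)
    (hb'1 : ∀ i j, B (b' (.inl i)) (b' (.inr j)) = if i = j then 1 else 0)
    (hb'2 : ∀ i j, B (b' (.inl i)) (b' (.inl j)) = 0)
    (hb'3 : ∀ i j, B (b' (.inr i)) (b' (.inr j)) = 0)
    (q : V → ZMod 2) (hq : ∀ x y, q (x + y) = q x + q y + B x y) :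
    ∑ i, q (b (.inl i)) * q (b (.inr i)) = ∑ i, q (b' (.inl i)) * q (b' (.inr i)) := by
  classical
  have h1 := basis_sum g B halt b hb1 hb2 hb3 q hq
  have h2 := basis_sum g B halt b' hb'1 hb'2 hb'3 q hq
  have heq : ∑ c : Fin g ⊕ Fin g → ZMod 2, eps (q (∑ k, c k • b k))
      = ∑ c : Fin g ⊕ Fin g → ZMod 2, eps (q (∑ k, c k • b' k)) := by
    have hrw : ∀ (bb : Module.Basis (Fin g ⊕ Fin g) (ZMod 2) V) (c : Fin g ⊕ Fin g → ZMod 2),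
        (∑ k, c k • bb k) = bb.equivFun.symm c := by
      intro bb c
      rw [Module.Basis.equivFun_symm_apply]
    simp only [hrw]
    exact Fintype.sum_equiv ((b.equivFun.symm.trans b'.equivFun).toEquiv)
      (fun c => eps (q (b.equivFun.symm c))) (fun c => eps (q (b'.equivFun.symm c)))
      (fun c => by
        simp only [LinearEquiv.coe_toEquiv, LinearEquiv.trans_apply,
          LinearEquiv.symm_apply_apply])
  rw [heq, h2] at h1
  exact eps_inj _ _ (mul_left_cancel₀ (by positivity : (2:ℤ)^g ≠ 0) h1.symm)
end

section
/- Two quadratic forms q, q' ∈ Q(V) on a symplectic F_2-vector space V = F_2^{2g} have the same Arf invariant if and only if there exists T ∈ Sp(V) with q' = T·q, where (T·q)(x) = q(T^{-1}x). That is, the Sp(V)-action on Q(V) has exactly two orbits, Q(V)^+ = {arf = 0} and Q(V)^- = {arf = 1}. -/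
/-- `F₂^{2g}` as `F₂^g × F₂^g`. -/
abbrev V (g : ℕ) := (Fin g → ZMod 2) × (Fin g → ZMod 2)

/-- The standard symplectic form `⟨(x,y),(x',y')⟩ = x·y' + x'·y` on `F₂^{2g}`. -/
def B {g : ℕ} (u v : V g) : ZMod 2 := ∑ i, u.1 i * v.2 i + ∑ i, v.1 i * u.2 i

/-- Quadratic forms with polarity the standard symplectic form. -/
def IsQuad {g : ℕ} (q : V g → ZMod 2) : Prop :=
  ∀ u v, q (u + v) = q u + q v + B u v

/-- The Arf invariant with respect to the standard symplectic basis. -/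
def arf {g : ℕ} (q : V g → ZMod 2) : ZMod 2 :=
  ∑ i, q (Pi.single i 1, 0) * q (0, Pi.single i 1)

/-! ### Auxiliary lemmas -/

lemma zmod2_add_self (a : ZMod 2) : a + a = 0 := by revert a; decide
lemma zmod2_mul_self (a : ZMod 2) : a * a = a := by revert a; decide
lemma zmod2_cases (a : ZMod 2) : a = 0 ∨ a = 1 := by revert a; decide

section BL
variable {g : ℕ}

lemma B_symm (u v : V g) : B u v = B v u := by
  simp only [B]; ring

lemma B_self (u : V g) : B u u = 0 := zmod2_add_self _

lemma B_add_left (x y v : V g) : B (x + y) v = B x v + B y v := by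
  simp only [B, Prod.fst_add, Prod.snd_add, Pi.add_apply, add_mul, mul_add,
    Finset.sum_add_distrib]
  ring

lemma B_add_right (x y v : V g) : B v (x + y) = B v x + B v y := by
  rw [B_symm, B_add_left, B_symm x v, B_symm y v]

lemma B_smul_left (c : ZMod 2) (x v : V g) : B (c • x) v = c * B x v := by
  simp only [B, Prod.smul_fst, Prod.smul_snd, Pi.smul_apply, smul_eq_mul,
    mul_add, Finset.mul_sum]
  congr 1 <;> exact Finset.sum_congr rfl fun i _ => by ring

lemma B_smul_right (c : ZMod 2) (x v : V g) : B v (c • x) = c * B v x := by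
  rw [B_symm, B_smul_left, B_symm]

lemma B_single_left (i : Fin g) (a b : ZMod 2) (u : V g) :
    B (Pi.single i a, Pi.single i b) u = a * u.2 i + u.1 i * b := by
  simp only [B]
  congr 1
  · rw [Finset.sum_eq_single i (fun k _ hk => by rw [Pi.single_eq_of_ne hk, zero_mul])
      (fun h => absurd (Finset.mem_univ i) h), Pi.single_eq_same]
  · rw [Finset.sum_eq_single i (fun k _ hk => by rw [Pi.single_eq_of_ne hk, mul_zero])
      (fun h => absurd (Finset.mem_univ i) h), Pi.single_eq_same]

lemma quad_zero {q : V g → ZMod 2} (hq : IsQuad q) : q 0 = 0 := by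
  have h := hq 0 0
  have hB : B (0 : V g) 0 = 0 := by simp [B]
  rw [add_zero, hB, add_zero] at h
  linear_combination -h

lemma quad_single {q : V g → ZMod 2} (hq : IsQuad q) (i : Fin g) (a b : ZMod 2) :
    q (Pi.single i a, Pi.single i b) =
      q (Pi.single i 1, 0) * a + q (0, Pi.single i 1) * b + a * b := by
  have hB : B ((Pi.single i 1, 0) : V g) (0, Pi.single i 1) = 1 := by
    simp [B, Pi.single_apply]
  rcases zmod2_cases a with rfl | rfl <;> rcases zmod2_cases b with rfl | rfl
  · simp; exact quad_zero hq
  · simp [Pi.single_zero]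
  · simp [Pi.single_zero]
  · have h := hq (Pi.single i 1, 0) ((0, Pi.single i 1) : V g)
    have he : ((Pi.single i 1, 0) : V g) + (0, Pi.single i 1)
        = (Pi.single i 1, Pi.single i 1) := by
      simp [Prod.ext_iff]
    rw [he, hB] at h
    rw [h]; ring

lemma sum_single_apply_not_mem {s : Finset (Fin g)} {j : Fin g} (hj : j ∉ s)
    (f : Fin g → ZMod 2) : (∑ i ∈ s, Pi.single i (f i)) j = 0 := by
  rw [Finset.sum_apply]
  refine Finset.sum_eq_zero fun i hi => Pi.single_eq_of_ne ?_ _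
  rintro rfl; exact hj hi

lemma quad_sum {q : V g → ZMod 2} (hq : IsQuad q) (x : V g) :
    q x = ∑ i, q (Pi.single i (x.1 i), Pi.single i (x.2 i)) := by
  have main : ∀ s : Finset (Fin g),
      q (∑ i ∈ s, Pi.single i (x.1 i), ∑ i ∈ s, Pi.single i (x.2 i)) =
        ∑ i ∈ s, q (Pi.single i (x.1 i), Pi.single i (x.2 i)) := by
    intro s
    induction s using Finset.cons_induction with
    | empty => simp; exact quad_zero hq
    | cons j s hj ih =>
      rw [Finset.sum_cons, Finset.sum_cons, Finset.sum_cons]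
      have he : ((Pi.single j (x.1 j) + ∑ i ∈ s, Pi.single i (x.1 i),
            Pi.single j (x.2 j) + ∑ i ∈ s, Pi.single i (x.2 i)) : V g)
          = ((Pi.single j (x.1 j), Pi.single j (x.2 j)) : V g)
            + (∑ i ∈ s, Pi.single i (x.1 i), ∑ i ∈ s, Pi.single i (x.2 i)) := rfl
      rw [he, hq, ih, B_single_left]
      dsimp only
      rw [sum_single_apply_not_mem hj, sum_single_apply_not_mem hj]
      ring
  have h := main Finset.univ
  rw [Finset.univ_sum_single, Finset.univ_sum_single] at h
  simpa using h

lemma quad_repr {q : V g → ZMod 2} (hq : IsQuad q) (x : V g) :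
    q x = ∑ i, (q (Pi.single i 1, 0) * x.1 i + q (0, Pi.single i 1) * x.2 i
      + x.1 i * x.2 i) := by
  rw [quad_sum hq x]
  exact Finset.sum_congr rfl fun i _ => quad_single hq i _ _

end BL

/-! ### Character sums -/

def chi : ZMod 2 → ℤ := fun a => if a = 0 then 1 else -1

lemma chi_add : ∀ a b : ZMod 2, chi (a + b) = chi a * chi b := by decide
lemma chi_inj : ∀ a b : ZMod 2, chi a = chi b → a = b := by decide

lemma chi_sum {ι : Type*} (s : Finset ι) (f : ι → ZMod 2) :
    chi (∑ i ∈ s, f i) = ∏ i ∈ s, chi (f i) := by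
  induction s using Finset.cons_induction with
  | empty => simp [chi]
  | cons j s hj ih => rw [Finset.sum_cons, Finset.prod_cons, chi_add, ih]

lemma chi_factor : ∀ a b : ZMod 2,
    (∑ p : ZMod 2 × ZMod 2, chi (a * p.1 + b * p.2 + p.1 * p.2)) = 2 * chi (a * b) := by
  decide

lemma char_sum_eq {g : ℕ} {q : V g → ZMod 2} (hq : IsQuad q) :
    ∑ x : V g, chi (q x) = 2 ^ g * chi (arf q) := by
  classical
  have h1 : ∀ x : V g, chi (q x) =
      ∏ i, chi (q (Pi.single i 1, 0) * x.1 i + q (0, Pi.single i 1) * x.2 i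
        + x.1 i * x.2 i) := by
    intro x
    rw [quad_repr hq x, chi_sum]
  simp_rw [h1]
  rw [← Fintype.sum_equiv (Equiv.arrowProdEquivProdArrow (Fin g) (fun _ => ZMod 2) (fun _ => ZMod 2))
    (fun y => ∏ i, chi (q (Pi.single i 1, 0) * (y i).1 + q (0, Pi.single i 1) * (y i).2
      + (y i).1 * (y i).2))
    (fun x => ∏ i, chi (q (Pi.single i 1, 0) * x.1 i + q (0, Pi.single i 1) * x.2 i
      + x.1 i * x.2 i))
    (fun y => rfl)]
  have hps := Finset.prod_univ_sum (fun _ : Fin g => (Finset.univ : Finset (ZMod 2 × ZMod 2)))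
    (fun i p => chi (q (Pi.single i 1, 0) * p.1 + q (0, Pi.single i 1) * p.2 + p.1 * p.2))
  rw [Fintype.piFinset_univ] at hps
  rw [← hps]
  have h2 : ∀ i : Fin g, (∑ p : ZMod 2 × ZMod 2,
      chi (q (Pi.single i 1, 0) * p.1 + q (0, Pi.single i 1) * p.2 + p.1 * p.2))
      = 2 * chi (q (Pi.single i 1, 0) * q (0, Pi.single i 1)) :=
    fun i => chi_factor _ _
  rw [Finset.prod_congr rfl fun i _ => h2 i, Finset.prod_mul_distrib,
    Finset.prod_const, Finset.card_univ, Fintype.card_fin, ← chi_sum]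
  rfl

/-! ### Main theorem -/

theorem two_orbits_of_symplectic_group (g : ℕ)
    (q q' : V g → ZMod 2) (hq : IsQuad q) (hq' : IsQuad q') :
    arf q = arf q' ↔
      ∃ T : V g ≃ₗ[ZMod 2] V g,
        (∀ u v : V g, B (T u) (T v) = B u v) ∧ ∀ x, q' x = q (T.symm x) := by
  constructor
  · intro h
    classical
    set v : V g := (fun i => q (0, Pi.single i 1) + q' (0, Pi.single i 1),
      fun i => q (Pi.single i 1, 0) + q' (Pi.single i 1, 0)) with hv
    -- q v = arf q + arf q' = 0
    have hqv : q v = 0 := by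
      have hr := quad_repr hq v
      have key4 : ∀ a b a' b' : ZMod 2,
          a * (b + b') + b * (a + a') + (b + b') * (a + a') = a * b + a' * b' := by decide
      have : q v = ∑ i, (q (Pi.single i 1, 0) * q (0, Pi.single i 1)
          + q' (Pi.single i 1, 0) * q' (0, Pi.single i 1)) := by
        rw [hr]
        exact Finset.sum_congr rfl fun i _ => key4 _ _ _ _
      rw [this, Finset.sum_add_distrib]
      have : arf q + arf q' = 0 := by rw [h]; exact zmod2_add_self _
      exact this
    -- the transvection x ↦ x + B x v • v
    have key : ∀ x : V g, q (x + B x v • v) = q x + B x v := by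
      intro x
      have h1 := hq x (B x v • v)
      have h2 : q (B x v • v) = 0 := by
        rcases zmod2_cases (B x v) with hc | hc
        · rw [hc, zero_smul]; exact quad_zero hq
        · rw [hc, one_smul]; exact hqv
      rw [h1, h2, add_zero, B_smul_right, zmod2_mul_self]
    have hinv : ∀ x : V g, (x + B x v • v) + B (x + B x v • v) v • v = x := by
      intro x
      have hB : B (x + B x v • v) v = B x v := by
        rw [B_add_left, B_smul_left, B_self, mul_zero, add_zero]
      rw [hB, add_assoc, ← add_smul, zmod2_add_self, zero_smul, add_zero]
    let Tl : V g →ₗ[ZMod 2] V g :=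
      { toFun := fun x => x + B x v • v
        map_add' := fun x y => by
          rw [B_add_left, add_smul]
          abel
        map_smul' := fun c x => by
          rw [B_smul_left, RingHom.id_apply, smul_add, mul_smul]
           }
    have hcomp : Tl.comp Tl = LinearMap.id := LinearMap.ext fun x => hinv x
    refine ⟨LinearEquiv.ofLinear Tl Tl hcomp hcomp, ?_, ?_⟩
    · intro u w
      show B (Tl u) (Tl w) = B u w
      show B (u + B u v • v) (w + B w v • v) = B u w
      rw [B_add_left, B_add_right, B_add_right, B_smul_left, B_smul_right,
        B_smul_right, B_smul_left, B_self, mul_zero, mul_zero, add_zero]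
      have : B w v * B u v + (B u v * B v w) = 0 := by
        rw [B_symm v w, mul_comm]
        exact zmod2_add_self _
      rw [add_assoc, this, add_zero]
    · intro x
      rw [LinearEquiv.ofLinear_symm_apply]
      show q' x = q (x + B x v • v)
      rw [key]
      -- q' x = q x + B x v
      have hrq := quad_repr hq x
      have hrq' := quad_repr hq' x
      have hBxv : B x v = ∑ i, (x.1 i * (q (Pi.single i 1, 0) + q' (Pi.single i 1, 0))
          + (q (0, Pi.single i 1) + q' (0, Pi.single i 1)) * x.2 i) := by
        rw [show B x v = ∑ i, x.1 i * v.2 i + ∑ i, v.1 i * x.2 i from rfl,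
          ← Finset.sum_add_distrib]
      have key6 : ∀ a b a' b' x1 x2 : ZMod 2,
          a' * x1 + b' * x2 + x1 * x2 =
            (a * x1 + b * x2 + x1 * x2) + (x1 * (a + a') + (b + b') * x2) := by decide
      rw [hrq', hrq, hBxv, ← Finset.sum_add_distrib]
      exact Finset.sum_congr rfl fun i _ => key6 _ _ _ _ _ _
  · rintro ⟨T, hT, hTq⟩
    have h1 : ∑ x : V g, chi (q' x) = ∑ x : V g, chi (q x) := by
      simp_rw [hTq]
      exact Fintype.sum_bijective _ T.symm.bijective _ _ (fun x => rfl)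
    have h2 := (char_sum_eq hq').symm.trans (h1.trans (char_sum_eq hq))
    have h3 : chi (arf q') = chi (arf q) :=
      mul_left_cancel₀ (pow_ne_zero g (two_ne_zero)) h2
    exact (chi_inj _ _ h3).symm
end
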